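/- Let ε ∈ k and let n ∈ ℕ. If n_5(k) contains a Lie subalgebra isomorphic to L_{6,24}(ε), then there exists a ∈ k with a² = ε. Consequently, if a² ≠ ε for every a ∈ k, then any Lie subalgebra of n_n(k) isomorphic to L_{6,24}(ε) satisfies n ≥ 6. -/

import Mathlib

attribute [local instance 100] LieRing.ofAssociativeRing

/-- The Lie algebra `n_n(k)` of strictly upper triangular `n × n` matrices over `k`. -/
def strictUpper (k : Type*) [Field k] (n : ℕ) :
    LieSubalgebra k (Matrix (Fin n) (Fin n) k) where
  carrier := {A | ∀ i j : Fin n, j ≤ i → A i j = 0}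
  add_mem' := by
    intro A B hA hB i j hij
    simp [Matrix.add_apply, hA i j hij, hB i j hij]
  zero_mem' := by intro i j hij; simp
  smul_mem' := by
    intro c A hA i j hij
    simp [Matrix.smul_apply, hA i j hij]
  lie_mem' := by
    intro A B hA hB i j hij
    have key : ∀ (X Y : Matrix (Fin n) (Fin n) k),
        (∀ i j : Fin n, j ≤ i → X i j = 0) → (∀ i j : Fin n, j ≤ i → Y i j = 0) →
        (X * Y) i j = 0 := by
      intro X Y hX hY
      rw [Matrix.mul_apply]
      apply Finset.sum_eq_zero
      intro l _
      by_cases h : l ≤ i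
      · rw [hX i l h, zero_mul]
      · push_neg at h
        rw [hY l j (hij.trans h.le), mul_zero]
    have hbr : ⁅A, B⁆ = A * B - B * A := Ring.lie_def A B
    rw [hbr, Matrix.sub_apply, key A B hA hB, key B A hB hA, sub_zero]

/-- A basis of a Lie algebra realizing the bracket table of `L_{6,24}(ε)`:
`[X1,X2] = X3`, `[X1,X3] = Z1`, `[X1,X4] = ε • Z2`, `[X2,X3] = Z2`, `[X2,X4] = Z1`, all other
brackets of basis vectors zero.  Here `X1, X2, X3, X4, Z1, Z2` are `b 0, ..., b 5`. -/
def IsL624Basis {k L : Type*} [Field k] [LieRing L] [LieAlgebra k L] (ε : k)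
    (b : Module.Basis (Fin 6) k L) : Prop :=
  ⁅b 0, b 1⁆ = b 2 ∧ ⁅b 0, b 2⁆ = b 4 ∧ ⁅b 0, b 3⁆ = ε • b 5 ∧
  ⁅b 1, b 2⁆ = b 5 ∧ ⁅b 1, b 3⁆ = b 4 ∧
  ⁅b 0, b 4⁆ = 0 ∧ ⁅b 0, b 5⁆ = 0 ∧ ⁅b 1, b 4⁆ = 0 ∧ ⁅b 1, b 5⁆ = 0 ∧
  ⁅b 2, b 3⁆ = 0 ∧ ⁅b 2, b 4⁆ = 0 ∧ ⁅b 2, b 5⁆ = 0 ∧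
  ⁅b 3, b 4⁆ = 0 ∧ ⁅b 3, b 5⁆ = 0 ∧ ⁅b 4, b 5⁆ = 0

section L624Aux

def L624Upp {k : Type*} [Field k] (s : ℕ) (A : Matrix (Fin 5) (Fin 5) k) : Prop :=
  ∀ i j : Fin 5, (j : ℕ) < (i : ℕ) + s → A i j = 0

theorem L624Upp.mul {k : Type*} [Field k] {s t : ℕ} {A B : Matrix (Fin 5) (Fin 5) k}
    (hA : L624Upp s A) (hB : L624Upp t B) : L624Upp (s + t) (A * B) := by
  intro i j hij
  rw [Matrix.mul_apply]
  apply Finset.sum_eq_zero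
  intro l _
  rcases lt_or_ge (l : ℕ) ((i : ℕ) + s) with h | h
  · rw [hA i l h, zero_mul]
  · rw [hB l j (by omega), mul_zero]

theorem L624Upp.lie {k : Type*} [Field k] {s t : ℕ} {A B : Matrix (Fin 5) (Fin 5) k}
    (hA : L624Upp s A) (hB : L624Upp t B) : L624Upp (s + t) ⁅A, B⁆ := by
  intro i j hij
  rw [Ring.lie_def, Matrix.sub_apply, hA.mul hB i j hij, (hB.mul hA) i j (by omega), sub_zero]

theorem L624lie02 {k : Type*} [Field k] {A B : Matrix (Fin 5) (Fin 5) k}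
    (hA : L624Upp 1 A) (hB : L624Upp 1 B) :
    (⁅A, B⁆ : Matrix (Fin 5) (Fin 5) k) 0 2 = A 0 1 * B 1 2 - B 0 1 * A 1 2 := by
  rw [Ring.lie_def]
  simp only [Matrix.sub_apply, Matrix.mul_apply, Fin.sum_univ_five,
    hA 0 0 (by decide), hB 2 2 (by decide), hB 3 2 (by decide), hB 4 2 (by decide), hB 0 0 (by decide), hA 2 2 (by decide), hA 3 2 (by decide), hA 4 2 (by decide)]
  ring

theorem L624lie13 {k : Type*} [Field k] {A B : Matrix (Fin 5) (Fin 5) k}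
    (hA : L624Upp 1 A) (hB : L624Upp 1 B) :
    (⁅A, B⁆ : Matrix (Fin 5) (Fin 5) k) 1 3 = A 1 2 * B 2 3 - B 1 2 * A 2 3 := by
  rw [Ring.lie_def]
  simp only [Matrix.sub_apply, Matrix.mul_apply, Fin.sum_univ_five,
    hA 1 0 (by decide), hA 1 1 (by decide), hB 3 3 (by decide), hB 4 3 (by decide), hB 1 0 (by decide), hB 1 1 (by decide), hA 3 3 (by decide), hA 4 3 (by decide)]
  ring

theorem L624lie24 {k : Type*} [Field k] {A B : Matrix (Fin 5) (Fin 5) k}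
    (hA : L624Upp 1 A) (hB : L624Upp 1 B) :
    (⁅A, B⁆ : Matrix (Fin 5) (Fin 5) k) 2 4 = A 2 3 * B 3 4 - B 2 3 * A 3 4 := by
  rw [Ring.lie_def]
  simp only [Matrix.sub_apply, Matrix.mul_apply, Fin.sum_univ_five,
    hA 2 0 (by decide), hA 2 1 (by decide), hA 2 2 (by decide), hB 4 4 (by decide), hB 2 0 (by decide), hB 2 1 (by decide), hB 2 2 (by decide), hA 4 4 (by decide)]
  ring

theorem L624lie03 {k : Type*} [Field k] {A B : Matrix (Fin 5) (Fin 5) k}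
    (hA : L624Upp 1 A) (hB : L624Upp 1 B) :
    (⁅A, B⁆ : Matrix (Fin 5) (Fin 5) k) 0 3 = A 0 1 * B 1 3 + A 0 2 * B 2 3 - B 0 1 * A 1 3 - B 0 2 * A 2 3 := by
  rw [Ring.lie_def]
  simp only [Matrix.sub_apply, Matrix.mul_apply, Fin.sum_univ_five,
    hA 0 0 (by decide), hB 3 3 (by decide), hB 4 3 (by decide), hB 0 0 (by decide), hA 3 3 (by decide), hA 4 3 (by decide)]
  ring

theorem L624lie14 {k : Type*} [Field k] {A B : Matrix (Fin 5) (Fin 5) k}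
    (hA : L624Upp 1 A) (hB : L624Upp 1 B) :
    (⁅A, B⁆ : Matrix (Fin 5) (Fin 5) k) 1 4 = A 1 2 * B 2 4 + A 1 3 * B 3 4 - B 1 2 * A 2 4 - B 1 3 * A 3 4 := by
  rw [Ring.lie_def]
  simp only [Matrix.sub_apply, Matrix.mul_apply, Fin.sum_univ_five,
    hA 1 0 (by decide), hA 1 1 (by decide), hB 4 4 (by decide), hB 1 0 (by decide), hB 1 1 (by decide), hA 4 4 (by decide)]
  ring

theorem L624lie04 {k : Type*} [Field k] {A B : Matrix (Fin 5) (Fin 5) k}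
    (hA : L624Upp 1 A) (hB : L624Upp 1 B) :
    (⁅A, B⁆ : Matrix (Fin 5) (Fin 5) k) 0 4 = A 0 1 * B 1 4 + A 0 2 * B 2 4 + A 0 3 * B 3 4 - B 0 1 * A 1 4 - B 0 2 * A 2 4 - B 0 3 * A 3 4 := by
  rw [Ring.lie_def]
  simp only [Matrix.sub_apply, Matrix.mul_apply, Fin.sum_univ_five,
    hA 0 0 (by decide), hB 4 4 (by decide), hB 0 0 (by decide), hA 4 4 (by decide)]
  ring

theorem L624lieM03 {k : Type*} [Field k] {A B : Matrix (Fin 5) (Fin 5) k}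
    (hA : L624Upp 1 A) (hB : L624Upp 2 B) :
    (⁅A, B⁆ : Matrix (Fin 5) (Fin 5) k) 0 3 = A 0 1 * B 1 3 - B 0 2 * A 2 3 := by
  rw [Ring.lie_def]
  simp only [Matrix.sub_apply, Matrix.mul_apply, Fin.sum_univ_five,
    hA 0 0 (by decide), hB 2 3 (by decide), hB 3 3 (by decide), hB 4 3 (by decide), hB 0 0 (by decide), hB 0 1 (by decide), hA 3 3 (by decide), hA 4 3 (by decide)]
  ring

theorem L624lieM14 {k : Type*} [Field k] {A B : Matrix (Fin 5) (Fin 5) k}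
    (hA : L624Upp 1 A) (hB : L624Upp 2 B) :
    (⁅A, B⁆ : Matrix (Fin 5) (Fin 5) k) 1 4 = A 1 2 * B 2 4 - B 1 3 * A 3 4 := by
  rw [Ring.lie_def]
  simp only [Matrix.sub_apply, Matrix.mul_apply, Fin.sum_univ_five,
    hA 1 0 (by decide), hA 1 1 (by decide), hB 3 4 (by decide), hB 4 4 (by decide), hB 1 0 (by decide), hB 1 1 (by decide), hB 1 2 (by decide), hA 4 4 (by decide)]
  ring

theorem L624lieM04 {k : Type*} [Field k] {A B : Matrix (Fin 5) (Fin 5) k}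
    (hA : L624Upp 1 A) (hB : L624Upp 2 B) :
    (⁅A, B⁆ : Matrix (Fin 5) (Fin 5) k) 0 4 = A 0 1 * B 1 4 + A 0 2 * B 2 4 - B 0 2 * A 2 4 - B 0 3 * A 3 4 := by
  rw [Ring.lie_def]
  simp only [Matrix.sub_apply, Matrix.mul_apply, Fin.sum_univ_five,
    hA 0 0 (by decide), hB 3 4 (by decide), hB 4 4 (by decide), hB 0 0 (by decide), hB 0 1 (by decide), hA 4 4 (by decide)]
  ring

theorem L624lieN04 {k : Type*} [Field k] {A B : Matrix (Fin 5) (Fin 5) k}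
    (hA : L624Upp 1 A) (hB : L624Upp 3 B) :
    (⁅A, B⁆ : Matrix (Fin 5) (Fin 5) k) 0 4 = A 0 1 * B 1 4 - B 0 3 * A 3 4 := by
  rw [Ring.lie_def]
  simp only [Matrix.sub_apply, Matrix.mul_apply, Fin.sum_univ_five,
    hA 0 0 (by decide), hB 2 4 (by decide), hB 3 4 (by decide), hB 4 4 (by decide), hB 0 0 (by decide), hB 0 1 (by decide), hB 0 2 (by decide), hA 4 4 (by decide)]
  ring

theorem L624SLred {k : Type*} [Field k] [CharZero k]
    (e t b1 c1 d1 p1 q1 r1 b2 c2 d2 p2 q2 r2 p4 q4 r4 m4 n4 : k)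
    (hE1 : t*d1*q4 - p4*c1 = e*(t*d2*(b1*c2 - b2*c1) + t*(b1*d2 - b2*d1)*c2))
    (hE2 : b1*r4 - q4*d1 = e*(b2*(c1*d2 - c2*d1) - (b1*c2 - b2*c1)*d2))
    (hE3 : t*d2*q4 - p4*c2 = (t*d1*(b1*c2 - b2*c1) + t*(b1*d2 - b2*d1)*c1))
    (hE4 : b2*r4 - q4*d2 = (b1*(c1*d2 - c2*d1) - (b1*c2 - b2*c1)*d1))
    (hF1 : t*d1*n4 + p1*r4 - p4*r1 - m4*d1 = e*(t*d2*(b1*r2 + q1*d2 - b2*r1 - q2*d1) + p2*(c1*d2 - c2*d1) + t*(b1*d2 - b2*d1)*r2 - (t*d1*q2 + p1*c2 - t*d2*q1 - p2*c1)*d2))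
    (hF2 : t*d2*n4 + p2*r4 - p4*r2 - m4*d2 = (t*d1*(b1*r2 + q1*d2 - b2*r1 - q2*d1) + p1*(c1*d2 - c2*d1) + t*(b1*d2 - b2*d1)*r1 - (t*d1*q2 + p1*c2 - t*d2*q1 - p2*c1)*d1))
    (hT4 : (t*d1*(b1*c2 - b2*c1) + t*(b1*d2 - b2*d1)*c1) = t*(b1*(c1*d2 - c2*d1) - (b1*c2 - b2*c1)*d1))
    (hT5 : (t*d2*(b1*c2 - b2*c1) + t*(b1*d2 - b2*d1)*c2) = t*(b2*(c1*d2 - c2*d1) - (b1*c2 - b2*c1)*d2))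
    (hN : (b1*(c1*d2 - c2*d1) - (b1*c2 - b2*c1)*d1)*(t*d2*(b1*r2 + q1*d2 - b2*r1 - q2*d1) + p2*(c1*d2 - c2*d1) + t*(b1*d2 - b2*d1)*r2 - (t*d1*q2 + p1*c2 - t*d2*q1 - p2*c1)*d2) ≠ (b2*(c1*d2 - c2*d1) - (b1*c2 - b2*c1)*d2)*(t*d1*(b1*r2 + q1*d2 - b2*r1 - q2*d1) + p1*(c1*d2 - c2*d1) + t*(b1*d2 - b2*d1)*r1 - (t*d1*q2 + p1*c2 - t*d2*q1 - p2*c1)*d1)) :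
    ∃ x : k, x^2 = e := by
  by_cases ht : t = 0
  · -- tau = 0 case
    subst ht
    have hcc : ¬(c1 = 0 ∧ c2 = 0) := by
      rintro ⟨u, v⟩
      subst u v
      exact hN (by ring)
    have hp4 : p4 = 0 := by
      rcases not_and_or.mp hcc with h | h
      · have h1 : p4 * c1 = 0 := by linear_combination -hE1
        exact (mul_eq_zero.mp h1).resolve_right h
      · have h1 : p4 * c2 = 0 := by linear_combination -hE3
        exact (mul_eq_zero.mp h1).resolve_right h
    subst hp4
    have hDN : (e*d2^2 - d1^2) * ((b1*(c1*d2 - c2*d1) - (b1*c2 - b2*c1)*d1)*p2 - (b2*(c1*d2 - c2*d1) - (b1*c2 - b2*c1)*d2)*p1 - (p1*c2 - p2*c1)*(b1*d2 - b2*d1)) = 0 := by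
      linear_combination (p1*d2 - p2*d1)*(d2*hE2 - d1*hE4) - (b1*d2 - b2*d1)*(d2*hF1 - d1*hF2)
    have hRN : (c1*d2 - c2*d1) * ((b1*(c1*d2 - c2*d1) - (b1*c2 - b2*c1)*d1)*p2 - (b2*(c1*d2 - c2*d1) - (b1*c2 - b2*c1)*d2)*p1 - (p1*c2 - p2*c1)*(b1*d2 - b2*d1)) ≠ 0 := by
      intro h
      exact hN (by linear_combination h)
    have hR0 : (c1*d2 - c2*d1) ≠ 0 := left_ne_zero_of_mul hRN
    have hN2 : ((b1*(c1*d2 - c2*d1) - (b1*c2 - b2*c1)*d1)*p2 - (b2*(c1*d2 - c2*d1) - (b1*c2 - b2*c1)*d2)*p1 - (p1*c2 - p2*c1)*(b1*d2 - b2*d1)) ≠ 0 := right_ne_zero_of_mul hRN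
    have hD : e*d2^2 - d1^2 = 0 := (mul_eq_zero.mp hDN).resolve_right hN2
    have hd2 : d2 ≠ 0 := by
      intro h
      subst h
      have : d1^2 = 0 := by linear_combination -hD
      have hd1 : d1 = 0 := by
        exact pow_eq_zero_iff (n := 2) (by norm_num) |>.mp this
      subst hd1
      exact hR0 (by ring)
    refine ⟨d1/d2, ?_⟩
    field_simp
    linear_combination -hD
  · -- tau ≠ 0
    have h31 : t*(-3*((b1*c2 - b2*c1)*(c1*d2 - c2*d1))) = 0 := by linear_combination c2*hT4 - c1*hT5
    have h32 : (b1*c2 - b2*c1)*(c1*d2 - c2*d1) = 0 := by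
      have h33 := (mul_eq_zero.mp h31).resolve_left ht
      have h34 : (-3 : k) ≠ 0 := by norm_num
      exact (mul_eq_zero.mp h33).resolve_left h34
    rcases mul_eq_zero.mp h32 with hQ0 | hR0
    · -- Q = 0
      have hc1 : t*((b1*d2 - b2*d1)*c1) = t*(b1*(c1*d2 - c2*d1)) := by linear_combination hT4 - 2*t*d1*hQ0
      have hc2 : t*((b1*d2 - b2*d1)*c2) = t*(b2*(c1*d2 - c2*d1)) := by linear_combination hT5 - 2*t*d2*hQ0
      have hq4 : t*((c1*d2 - c2*d1)*q4) = t*((b1*(c1*d2 - c2*d1) - (b1*c2 - b2*c1)*d1)*c1) - e*t*((b2*(c1*d2 - c2*d1) - (b1*c2 - b2*c1)*d2)*c2) := by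
        linear_combination -c2*hE1 + c1*hE3 + c1*hT4 - e*c2*hT5
      have key : 2*t^2*(e*(b2*(c1*d2 - c2*d1) - (b1*c2 - b2*c1)*d2)^2 - (b1*(c1*d2 - c2*d1) - (b1*c2 - b2*c1)*d1)^2) = 0 := by
        linear_combination (-(t^2)*(b2*(c1*d2 - c2*d1) - (b1*c2 - b2*c1)*d2))*hE2 + t^2*(b1*(c1*d2 - c2*d1) - (b1*c2 - b2*c1)*d1)*hE4 + t*(b1*d2 - b2*d1)*hq4 + t*(b1*(c1*d2 - c2*d1) - (b1*c2 - b2*c1)*d1)*hc1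
          - e*t*(b2*(c1*d2 - c2*d1) - (b1*c2 - b2*c1)*d2)*hc2 + (t^2*((b1*(c1*d2 - c2*d1) - (b1*c2 - b2*c1)*d1)*d1 - e*(b2*(c1*d2 - c2*d1) - (b1*c2 - b2*c1)*d2)*d2 - (b1*d2 - b2*d1)*r4))*hQ0
      have h2t : (2:k)*t^2 ≠ 0 := by
        simp [ht]
      have hsq : e*(b2*(c1*d2 - c2*d1) - (b1*c2 - b2*c1)*d2)^2 - (b1*(c1*d2 - c2*d1) - (b1*c2 - b2*c1)*d1)^2 = 0 := by
        have := (mul_eq_zero.mp key)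
        rcases this with h | h
        · exact absurd (by linear_combination h) h2t
        · exact h
      have hmu : (b2*(c1*d2 - c2*d1) - (b1*c2 - b2*c1)*d2) ≠ 0 := by
        intro h
        have hl2 : (b1*(c1*d2 - c2*d1) - (b1*c2 - b2*c1)*d1)^2 = 0 := by linear_combination -hsq + e*((b2*(c1*d2 - c2*d1) - (b1*c2 - b2*c1)*d2) + 0)*h
        have hl : (b1*(c1*d2 - c2*d1) - (b1*c2 - b2*c1)*d1) = 0 := pow_eq_zero_iff (n := 2) (by norm_num) |>.mp hl2
        exact hN (by linear_combination (t*d2*(b1*r2 + q1*d2 - b2*r1 - q2*d1) + p2*(c1*d2 - c2*d1) + t*(b1*d2 - b2*d1)*r2 - (t*d1*q2 + p1*c2 - t*d2*q1 - p2*c1)*d2)*hl - (t*d1*(b1*r2 + q1*d2 - b2*r1 - q2*d1) + p1*(c1*d2 - c2*d1) + t*(b1*d2 - b2*d1)*r1 - (t*d1*q2 + p1*c2 - t*d2*q1 - p2*c1)*d1)*h)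
      refine ⟨(b1*(c1*d2 - c2*d1) - (b1*c2 - b2*c1)*d1)/(b2*(c1*d2 - c2*d1) - (b1*c2 - b2*c1)*d2), ?_⟩
      rw [div_pow, div_eq_iff (pow_ne_zero 2 hmu)]
      linear_combination -hsq
    · -- R = 0
      have keyB : t*((b1*c2 - b2*c1)*(e*d2^2 - d1^2)) = 0 := by
        linear_combination d2*hE1 - d1*hE3 - d1*hT4 + e*d2*hT5 + (p4 - t*(b1*d1 - e*b2*d2))*hR0
      have h35 := (mul_eq_zero.mp keyB).resolve_left ht
      rcases mul_eq_zero.mp h35 with hQ0 | hD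
      · have hl : (b1*(c1*d2 - c2*d1) - (b1*c2 - b2*c1)*d1) = 0 := by linear_combination b1*hR0 - d1*hQ0
        have hm : (b2*(c1*d2 - c2*d1) - (b1*c2 - b2*c1)*d2) = 0 := by linear_combination b2*hR0 - d2*hQ0
        exact absurd (by linear_combination (t*d2*(b1*r2 + q1*d2 - b2*r1 - q2*d1) + p2*(c1*d2 - c2*d1) + t*(b1*d2 - b2*d1)*r2 - (t*d1*q2 + p1*c2 - t*d2*q1 - p2*c1)*d2)*hl - (t*d1*(b1*r2 + q1*d2 - b2*r1 - q2*d1) + p1*(c1*d2 - c2*d1) + t*(b1*d2 - b2*d1)*r1 - (t*d1*q2 + p1*c2 - t*d2*q1 - p2*c1)*d1)*hm) hN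
      · have hd2 : d2 ≠ 0 := by
          intro h
          subst h
          have : d1^2 = 0 := by linear_combination -hD
          have hd1 : d1 = 0 := pow_eq_zero_iff (n := 2) (by norm_num) |>.mp this
          subst hd1
          exact hN (by ring)
        refine ⟨d1/d2, ?_⟩
        field_simp
        linear_combination -hD
theorem L624SLmid {k : Type*} [Field k] [CharZero k]
    (e a1 b1 c1 d1 p1 q1 r1 m1 n1 a2 b2 c2 d2 p2 q2 r2 m2 n2
     a4 b4 c4 d4 p4 q4 r4 m4 n4 P Q R S1 S2 Z11 Z12 Z21 Z22 W1 W2 : k)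
    (hP : P = a1*b2 - a2*b1) (hQ : Q = b1*c2 - b2*c1) (hR : R = c1*d2 - c2*d1)
    (hS1 : S1 = a1*q2 + p1*c2 - a2*q1 - p2*c1) (hS2 : S2 = b1*r2 + q1*d2 - b2*r1 - q2*d1)
    (hZ11 : Z11 = a1*Q - P*c1) (hZ12 : Z12 = b1*R - Q*d1)
    (hZ21 : Z21 = a2*Q - P*c2) (hZ22 : Z22 = b2*R - Q*d2)
    (hW1 : W1 = a1*S2 + p1*R - P*r1 - S1*d1) (hW2 : W2 = a2*S2 + p2*R - P*r2 - S1*d2)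
    (hab1 : a1*b4 = a4*b1) (hbc1 : b1*c4 = b4*c1) (hcd1 : c1*d4 = c4*d1)
    (hab2 : a2*b4 = a4*b2) (hbc2 : b2*c4 = b4*c2) (hcd2 : c2*d4 = c4*d2)
    (hE1 : a1*q4 + p1*c4 - a4*q1 - p4*c1 = e*Z21)
    (hE2 : b1*r4 + q1*d4 - b4*r1 - q4*d1 = e*Z22)
    (hE3 : a2*q4 + p2*c4 - a4*q2 - p4*c2 = Z11)
    (hE4 : b2*r4 + q2*d4 - b4*r2 - q4*d2 = Z12)
    (hF1 : a1*n4 + p1*r4 + m1*d4 - a4*n1 - p4*r1 - m4*d1 = e*W2)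
    (hF2 : a2*n4 + p2*r4 + m2*d4 - a4*n2 - p4*r2 - m4*d2 = W1)
    (hG11 : a1*Z12 = d1*Z11) (hG12 : a1*Z22 = d1*Z21)
    (hG21 : a2*Z12 = d2*Z11) (hG22 : a2*Z22 = d2*Z21)
    (hG41 : a4*Z12 = d4*Z11) (hG42 : a4*Z22 = d4*Z21)
    (hz : Z12 ≠ 0 ∨ Z22 ≠ 0)
    (hind : ∀ lam mu : k, ¬(lam = 0 ∧ mu = 0) →
      ¬(mu*Z11 = lam*Z21 ∧ mu*Z12 = lam*Z22 ∧ mu*W1 = lam*W2)) :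
    ∃ x : k, x^2 = e := by
  subst hZ11 hZ12 hZ21 hZ22 hW1 hW2 hS1 hS2 hP hQ hR
  obtain ⟨t, ht1, ht2, ht3, ht4, ht5⟩ :
      ∃ t : k, a1 = t*d1 ∧ a2 = t*d2 ∧ a4 = t*d4 ∧
        (a1*(b1*c2 - b2*c1) - (a1*b2 - a2*b1)*c1)
          = t*(b1*(c1*d2 - c2*d1) - (b1*c2 - b2*c1)*d1) ∧
        (a2*(b1*c2 - b2*c1) - (a1*b2 - a2*b1)*c2)
          = t*(b2*(c1*d2 - c2*d1) - (b1*c2 - b2*c1)*d2) := by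
    rcases hz with h | h
    · refine ⟨(a1*(b1*c2 - b2*c1) - (a1*b2 - a2*b1)*c1)
          / (b1*(c1*d2 - c2*d1) - (b1*c2 - b2*c1)*d1), ?_, ?_, ?_, ?_, ?_⟩
      · rw [div_mul_eq_mul_div, eq_div_iff h]; linear_combination hG11
      · rw [div_mul_eq_mul_div, eq_div_iff h]; linear_combination hG21
      · rw [div_mul_eq_mul_div, eq_div_iff h]; linear_combination hG41
      · rw [div_mul_eq_mul_div, eq_div_iff h]
      · rw [div_mul_eq_mul_div, eq_div_iff h]
        by_cases hd1 : d1 = 0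
        · by_cases hd2 : d2 = 0
          · subst hd1 hd2; exact absurd (by ring) h
          · have hkey : d2*((a2*(b1*c2 - b2*c1) - (a1*b2 - a2*b1)*c2)
                * (b1*(c1*d2 - c2*d1) - (b1*c2 - b2*c1)*d1)
              - (a1*(b1*c2 - b2*c1) - (a1*b2 - a2*b1)*c1)
                * (b2*(c1*d2 - c2*d1) - (b1*c2 - b2*c1)*d2)) = 0 := by
              linear_combination (b2*(c1*d2 - c2*d1) - (b1*c2 - b2*c1)*d2)*hG21
                - (b1*(c1*d2 - c2*d1) - (b1*c2 - b2*c1)*d1)*hG22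
            have h2 := (mul_eq_zero.mp hkey).resolve_left hd2
            linear_combination h2
        · have hkey : d1*((a2*(b1*c2 - b2*c1) - (a1*b2 - a2*b1)*c2)
              * (b1*(c1*d2 - c2*d1) - (b1*c2 - b2*c1)*d1)
            - (a1*(b1*c2 - b2*c1) - (a1*b2 - a2*b1)*c1)
              * (b2*(c1*d2 - c2*d1) - (b1*c2 - b2*c1)*d2)) = 0 := by
            linear_combination (b2*(c1*d2 - c2*d1) - (b1*c2 - b2*c1)*d2)*hG11
              - (b1*(c1*d2 - c2*d1) - (b1*c2 - b2*c1)*d1)*hG12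
          have h2 := (mul_eq_zero.mp hkey).resolve_left hd1
          linear_combination h2
    · refine ⟨(a2*(b1*c2 - b2*c1) - (a1*b2 - a2*b1)*c2)
          / (b2*(c1*d2 - c2*d1) - (b1*c2 - b2*c1)*d2), ?_, ?_, ?_, ?_, ?_⟩
      · rw [div_mul_eq_mul_div, eq_div_iff h]; linear_combination hG12
      · rw [div_mul_eq_mul_div, eq_div_iff h]; linear_combination hG22
      · rw [div_mul_eq_mul_div, eq_div_iff h]; linear_combination hG42
      · rw [div_mul_eq_mul_div, eq_div_iff h]
        by_cases hd1 : d1 = 0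
        · by_cases hd2 : d2 = 0
          · subst hd1 hd2; exact absurd (by ring) h
          · have hkey : d2*((a1*(b1*c2 - b2*c1) - (a1*b2 - a2*b1)*c1)
                * (b2*(c1*d2 - c2*d1) - (b1*c2 - b2*c1)*d2)
              - (a2*(b1*c2 - b2*c1) - (a1*b2 - a2*b1)*c2)
                * (b1*(c1*d2 - c2*d1) - (b1*c2 - b2*c1)*d1)) = 0 := by
              linear_combination (b1*(c1*d2 - c2*d1) - (b1*c2 - b2*c1)*d1)*hG22
                - (b2*(c1*d2 - c2*d1) - (b1*c2 - b2*c1)*d2)*hG21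
            have h2 := (mul_eq_zero.mp hkey).resolve_left hd2
            linear_combination h2
        · have hkey : d1*((a1*(b1*c2 - b2*c1) - (a1*b2 - a2*b1)*c1)
              * (b2*(c1*d2 - c2*d1) - (b1*c2 - b2*c1)*d2)
            - (a2*(b1*c2 - b2*c1) - (a1*b2 - a2*b1)*c2)
              * (b1*(c1*d2 - c2*d1) - (b1*c2 - b2*c1)*d1)) = 0 := by
            linear_combination (b1*(c1*d2 - c2*d1) - (b1*c2 - b2*c1)*d1)*hG12
              - (b2*(c1*d2 - c2*d1) - (b1*c2 - b2*c1)*d2)*hG11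
          have h2 := (mul_eq_zero.mp hkey).resolve_left hd1
          linear_combination h2
      · rw [div_mul_eq_mul_div, eq_div_iff h]
  subst ht1 ht2 ht3
  have hPair : ¬((b1*(c1*d2 - c2*d1) - (b1*c2 - b2*c1)*d1) = 0
      ∧ (b2*(c1*d2 - c2*d1) - (b1*c2 - b2*c1)*d2) = 0) := by
    rintro ⟨u, v⟩
    rcases hz with h | h
    exacts [h u, h v]
  have hNe : (b1*(c1*d2 - c2*d1) - (b1*c2 - b2*c1)*d1)
        * ((t*d2)*(b1*r2 + q1*d2 - b2*r1 - q2*d1) + p2*(c1*d2 - c2*d1)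
          - ((t*d1)*b2 - (t*d2)*b1)*r2
          - ((t*d1)*q2 + p1*c2 - (t*d2)*q1 - p2*c1)*d2)
      ≠ (b2*(c1*d2 - c2*d1) - (b1*c2 - b2*c1)*d2)
        * ((t*d1)*(b1*r2 + q1*d2 - b2*r1 - q2*d1) + p1*(c1*d2 - c2*d1)
          - ((t*d1)*b2 - (t*d2)*b1)*r1
          - ((t*d1)*q2 + p1*c2 - (t*d2)*q1 - p2*c1)*d1) := by
    intro hcon
    refine hind (b1*(c1*d2 - c2*d1) - (b1*c2 - b2*c1)*d1)
      (b2*(c1*d2 - c2*d1) - (b1*c2 - b2*c1)*d2) hPair ⟨?_, by ring, by linear_combination -hcon⟩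
    linear_combination (b2*(c1*d2 - c2*d1) - (b1*c2 - b2*c1)*d2)*ht4
      - (b1*(c1*d2 - c2*d1) - (b1*c2 - b2*c1)*d1)*ht5
  have hc4 : c4 = 0 := by
    by_contra hc4
    have hQc : (b1*c2 - b2*c1)*c4 = 0 := by linear_combination c2*hbc1 - c1*hbc2
    have hRc : (c1*d2 - c2*d1)*c4 = 0 := by linear_combination c2*hcd1 - c1*hcd2
    have hQ0 := (mul_eq_zero.mp hQc).resolve_right hc4
    have hR0 := (mul_eq_zero.mp hRc).resolve_right hc4
    exact hPair ⟨by linear_combination b1*hR0 - d1*hQ0, by linear_combination b2*hR0 - d2*hQ0⟩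
  subst hc4
  have hcc : ¬(c1 = 0 ∧ c2 = 0) := by
    rintro ⟨u, v⟩
    subst u v
    exact hPair ⟨by ring, by ring⟩
  have hb4 : b4 = 0 := by
    rcases not_and_or.mp hcc with h | h
    · have h1 : b4*c1 = 0 := by linear_combination -hbc1
      exact (mul_eq_zero.mp h1).resolve_right h
    · have h1 : b4*c2 = 0 := by linear_combination -hbc2
      exact (mul_eq_zero.mp h1).resolve_right h
  have hd4 : d4 = 0 := by
    rcases not_and_or.mp hcc with h | h
    · have h1 : d4*c1 = 0 := by linear_combination hcd1
      exact (mul_eq_zero.mp h1).resolve_right h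
    · have h1 : d4*c2 = 0 := by linear_combination hcd2
      exact (mul_eq_zero.mp h1).resolve_right h
  subst hb4 hd4
  exact L624SLred e t b1 c1 d1 p1 q1 r1 b2 c2 d2 p2 q2 r2 p4 q4 r4 m4 n4
    (by linear_combination hE1) (by linear_combination hE2)
    (by linear_combination hE3) (by linear_combination hE4)
    (by linear_combination hF1) (by linear_combination hF2)
    (by linear_combination ht4) (by linear_combination ht5)
    (fun hcon => hNe (by linear_combination hcon))
theorem L624SL {k : Type*} [Field k] [CharZero k]
    (e a1 b1 c1 d1 p1 q1 r1 m1 n1 a2 b2 c2 d2 p2 q2 r2 m2 n2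
     a4 b4 c4 d4 p4 q4 r4 m4 n4 P Q R S1 S2 Z11 Z12 Z21 Z22 W1 W2 : k)
    (hP : P = a1*b2 - a2*b1) (hQ : Q = b1*c2 - b2*c1) (hR : R = c1*d2 - c2*d1)
    (hS1 : S1 = a1*q2 + p1*c2 - a2*q1 - p2*c1) (hS2 : S2 = b1*r2 + q1*d2 - b2*r1 - q2*d1)
    (hZ11 : Z11 = a1*Q - P*c1) (hZ12 : Z12 = b1*R - Q*d1)
    (hZ21 : Z21 = a2*Q - P*c2) (hZ22 : Z22 = b2*R - Q*d2)
    (hW1 : W1 = a1*S2 + p1*R - P*r1 - S1*d1) (hW2 : W2 = a2*S2 + p2*R - P*r2 - S1*d2)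
    (hab1 : a1*b4 = a4*b1) (hbc1 : b1*c4 = b4*c1) (hcd1 : c1*d4 = c4*d1)
    (hab2 : a2*b4 = a4*b2) (hbc2 : b2*c4 = b4*c2) (hcd2 : c2*d4 = c4*d2)
    (hE1 : a1*q4 + p1*c4 - a4*q1 - p4*c1 = e*Z21)
    (hE2 : b1*r4 + q1*d4 - b4*r1 - q4*d1 = e*Z22)
    (hE3 : a2*q4 + p2*c4 - a4*q2 - p4*c2 = Z11)
    (hE4 : b2*r4 + q2*d4 - b4*r2 - q4*d2 = Z12)
    (hF1 : a1*n4 + p1*r4 + m1*d4 - a4*n1 - p4*r1 - m4*d1 = e*W2)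
    (hF2 : a2*n4 + p2*r4 + m2*d4 - a4*n2 - p4*r2 - m4*d2 = W1)
    (hG11 : a1*Z12 = d1*Z11) (hG12 : a1*Z22 = d1*Z21)
    (hG21 : a2*Z12 = d2*Z11) (hG22 : a2*Z22 = d2*Z21)
    (hG41 : a4*Z12 = d4*Z11) (hG42 : a4*Z22 = d4*Z21)
    (hind : ∀ lam mu : k, ¬(lam = 0 ∧ mu = 0) →
      ¬(mu*Z11 = lam*Z21 ∧ mu*Z12 = lam*Z22 ∧ mu*W1 = lam*W2)) :
    ∃ x : k, x^2 = e := by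
  by_cases hz : Z12 = 0 ∧ Z22 = 0
  · -- flipped application
    have hz' : Z11 ≠ 0 ∨ Z21 ≠ 0 := by
      by_contra hcon
      push_neg at hcon
      obtain ⟨h11, h21⟩ := hcon
      by_cases hw : W1 = 0 ∧ W2 = 0
      · exact hind 0 1 (by simp)
          ⟨by rw [h11, h21]; ring, by rw [hz.1, hz.2]; ring, by rw [hw.1, hw.2]; ring⟩
      · exact hind W1 W2 hw
          ⟨by rw [h11, h21]; ring, by rw [hz.1, hz.2]; ring, by ring⟩
    have hz'' : -Z11 ≠ 0 ∨ -Z21 ≠ 0 := by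
      rcases hz' with h | h
      · exact Or.inl (by simpa using h)
      · exact Or.inr (by simpa using h)
    exact L624SLmid e (-d1) (-c1) (-b1) (-a1) (-r1) (-q1) (-p1) (-n1) (-m1)
      (-d2) (-c2) (-b2) (-a2) (-r2) (-q2) (-p2) (-n2) (-m2)
      (-d4) (-c4) (-b4) (-a4) (-r4) (-q4) (-p4) (-n4) (-m4)
      (-R) (-Q) (-P) (-S2) (-S1) (-Z12) (-Z11) (-Z22) (-Z21) (-W1) (-W2)
      (by linear_combination -hR) (by linear_combination -hQ) (by linear_combination -hP)
      (by linear_combination -hS2) (by linear_combination -hS1)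
      (by linear_combination -hZ12) (by linear_combination -hZ11)
      (by linear_combination -hZ22) (by linear_combination -hZ21)
      (by linear_combination -hW1) (by linear_combination -hW2)
      (by linear_combination -hcd1) (by linear_combination -hbc1) (by linear_combination -hab1)
      (by linear_combination -hcd2) (by linear_combination -hbc2) (by linear_combination -hab2)
      (by linear_combination -hE2) (by linear_combination -hE1)
      (by linear_combination -hE4) (by linear_combination -hE3)
      (by linear_combination -hF1) (by linear_combination -hF2)
      (by linear_combination -hG11) (by linear_combination -hG12)
      (by linear_combination -hG21) (by linear_combination -hG22)
      (by linear_combination -hG41) (by linear_combination -hG42)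
      hz''
      (fun lam mu hne hcc =>
        hind lam mu hne ⟨by linear_combination -hcc.2.1, by linear_combination -hcc.1,
          by linear_combination -hcc.2.2⟩)
  · exact L624SLmid e a1 b1 c1 d1 p1 q1 r1 m1 n1 a2 b2 c2 d2 p2 q2 r2 m2 n2
      a4 b4 c4 d4 p4 q4 r4 m4 n4 P Q R S1 S2 Z11 Z12 Z21 Z22 W1 W2
      hP hQ hR hS1 hS2 hZ11 hZ12 hZ21 hZ22 hW1 hW2 hab1 hbc1 hcd1 hab2 hbc2 hcd2
      hE1 hE2 hE3 hE4 hF1 hF2 hG11 hG12 hG21 hG22 hG41 hG42 (not_and_or.mp hz) hind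
theorem L624core {k : Type*} [Field k] [CharZero k] (e : k)
    (X1 X2 X4 X3m Z1 Z2 : Matrix (Fin 5) (Fin 5) k)
    (h1 : L624Upp 1 X1) (h2 : L624Upp 1 X2) (h4 : L624Upp 1 X4)
    (hX3 : X3m = ⁅X1, X2⁆) (hZ1 : Z1 = ⁅X1, X3m⁆) (hZ2 : Z2 = ⁅X2, X3m⁆)
    (hR1 : ⁅X1, X4⁆ = e • Z2) (hR2 : ⁅X2, X4⁆ = Z1)
    (hC11 : ⁅X1, Z1⁆ = 0) (hC12 : ⁅X1, Z2⁆ = 0)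
    (hC21 : ⁅X2, Z1⁆ = 0) (hC22 : ⁅X2, Z2⁆ = 0)
    (hC41 : ⁅X4, Z1⁆ = 0) (hC42 : ⁅X4, Z2⁆ = 0)
    (hind : ∀ lam mu : k, ¬(lam = 0 ∧ mu = 0) → mu • Z1 ≠ lam • Z2) :
    ∃ x : k, x ^ 2 = e := by
  have h3 : L624Upp 2 X3m := hX3 ▸ h1.lie h2
  have u1 : L624Upp 3 Z1 := hZ1 ▸ h1.lie h3
  have u2 : L624Upp 3 Z2 := hZ2 ▸ h2.lie h3
  -- entries of hR1 / hR2
  have er1 : ∀ i j : Fin 5, (⁅X1, X4⁆ : Matrix (Fin 5) (Fin 5) k) i j = e * Z2 i j := by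
    intro i j; rw [hR1]; simp [Matrix.smul_apply]
  have er2 : ∀ i j : Fin 5, (⁅X2, X4⁆ : Matrix (Fin 5) (Fin 5) k) i j = Z1 i j := by
    intro i j; rw [hR2]
  have ec : ∀ (A Z : Matrix (Fin 5) (Fin 5) k), ⁅A, Z⁆ = 0 →
      (⁅A, Z⁆ : Matrix (Fin 5) (Fin 5) k) 0 4 = 0 := by
    intro A Z h; rw [h]; rfl
  refine L624SL e (X1 0 1) (X1 1 2) (X1 2 3) (X1 3 4) (X1 0 2) (X1 1 3) (X1 2 4) (X1 0 3) (X1 1 4)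
    (X2 0 1) (X2 1 2) (X2 2 3) (X2 3 4) (X2 0 2) (X2 1 3) (X2 2 4) (X2 0 3) (X2 1 4)
    (X4 0 1) (X4 1 2) (X4 2 3) (X4 3 4) (X4 0 2) (X4 1 3) (X4 2 4) (X4 0 3) (X4 1 4)
    (X3m 0 2) (X3m 1 3) (X3m 2 4) (X3m 0 3) (X3m 1 4)
    (Z1 0 3) (Z1 1 4) (Z2 0 3) (Z2 1 4) (Z1 0 4) (Z2 0 4)
    ?_ ?_ ?_ ?_ ?_ ?_ ?_ ?_ ?_ ?_ ?_ ?_ ?_ ?_ ?_ ?_ ?_ ?_ ?_ ?_ ?_ ?_ ?_ ?_ ?_ ?_ ?_ ?_ ?_ ?_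
  · rw [hX3]; exact L624lie02 h1 h2
  · rw [hX3]; exact L624lie13 h1 h2
  · rw [hX3]; exact L624lie24 h1 h2
  · rw [hX3]; exact L624lie03 h1 h2
  · rw [hX3]; exact L624lie14 h1 h2
  · rw [hZ1]; exact L624lieM03 h1 h3
  · rw [hZ1]; exact L624lieM14 h1 h3
  · rw [hZ2]; exact L624lieM03 h2 h3
  · rw [hZ2]; exact L624lieM14 h2 h3
  · rw [hZ1]; exact L624lieM04 h1 h3
  · rw [hZ2]; exact L624lieM04 h2 h3
  · have h := er1 0 2; rw [L624lie02 h1 h4, u2 0 2 (by decide)] at h; linear_combination h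
  · have h := er1 1 3; rw [L624lie13 h1 h4, u2 1 3 (by decide)] at h; linear_combination h
  · have h := er1 2 4; rw [L624lie24 h1 h4, u2 2 4 (by decide)] at h; linear_combination h
  · have h := er2 0 2; rw [L624lie02 h2 h4, u1 0 2 (by decide)] at h; linear_combination h
  · have h := er2 1 3; rw [L624lie13 h2 h4, u1 1 3 (by decide)] at h; linear_combination h
  · have h := er2 2 4; rw [L624lie24 h2 h4, u1 2 4 (by decide)] at h; linear_combination h
  · have h := er1 0 3; rw [L624lie03 h1 h4] at h; linear_combination h
  · have h := er1 1 4; rw [L624lie14 h1 h4] at h; linear_combination h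
  · have h := er2 0 3; rw [L624lie03 h2 h4] at h; linear_combination h
  · have h := er2 1 4; rw [L624lie14 h2 h4] at h; linear_combination h
  · have h := er1 0 4; rw [L624lie04 h1 h4] at h; linear_combination h
  · have h := er2 0 4; rw [L624lie04 h2 h4] at h; linear_combination h
  · have h := ec X1 Z1 hC11; rw [L624lieN04 h1 u1] at h; linear_combination h
  · have h := ec X1 Z2 hC12; rw [L624lieN04 h1 u2] at h; linear_combination h
  · have h := ec X2 Z1 hC21; rw [L624lieN04 h2 u1] at h; linear_combination h
  · have h := ec X2 Z2 hC22; rw [L624lieN04 h2 u2] at h; linear_combination h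
  · have h := ec X4 Z1 hC41; rw [L624lieN04 h4 u1] at h; linear_combination h
  · have h := ec X4 Z2 hC42; rw [L624lieN04 h4 u2] at h; linear_combination h
  · intro lam mu hne hcc
    refine hind lam mu hne ?_
    ext i j
    simp only [Matrix.smul_apply, smul_eq_mul]
    fin_cases i <;> fin_cases j <;>
      first
        | exact hcc.1
        | exact hcc.2.1
        | exact hcc.2.2
        | (rw [u1 _ _ (by decide), u2 _ _ (by decide)]; ring)
section Pad
variable {k : Type*} [Field k] {n : ℕ} (hn : n ≤ 5)

def L624pad (A : Matrix (Fin n) (Fin n) k) : Matrix (Fin 5) (Fin 5) k :=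
  Matrix.of fun i j =>
    if h : (i : ℕ) < n ∧ (j : ℕ) < n then A ⟨i, h.1⟩ ⟨j, h.2⟩ else 0

theorem L624pad_apply (A : Matrix (Fin n) (Fin n) k) (i j : Fin 5) :
    L624pad A i j = if h : (i : ℕ) < n ∧ (j : ℕ) < n then A ⟨i, h.1⟩ ⟨j, h.2⟩ else 0 := rfl

theorem L624pad_entry (A : Matrix (Fin n) (Fin n) k) (i j : Fin n) :
    L624pad (n := n) A (Fin.castLE hn i) (Fin.castLE hn j) = A i j := by
  rw [L624pad_apply, dif_pos ⟨i.isLt, j.isLt⟩]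
  simp [Fin.eta]

theorem L624sum_five_castLE (F : Fin 5 → k) (hF : ∀ l : Fin 5, ¬((l : ℕ) < n) → F l = 0) :
    ∑ l : Fin 5, F l = ∑ l : Fin n, F (Fin.castLE hn l) := by
  classical
  have hsub : (Finset.univ.map ⟨Fin.castLE hn, Fin.castLE_injective hn⟩ : Finset (Fin 5))
      ⊆ Finset.univ := Finset.subset_univ _
  rw [← Finset.sum_subset hsub, Finset.sum_map]
  · rfl
  · intro x _ hx
    apply hF
    intro hlt
    exact hx (by simp [Finset.mem_map]; exact ⟨⟨(x : ℕ), hlt⟩, by ext; simp⟩)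

theorem L624pad_mul (hn : n ≤ 5) (A B : Matrix (Fin n) (Fin n) k) :
    L624pad (n := n) (A * B) = L624pad (n := n) A * L624pad (n := n) B := by
  ext i j
  rw [Matrix.mul_apply, L624pad_apply]
  split_ifs with h
  · rw [L624sum_five_castLE hn _ ?side]
    case side =>
      intro l hl
      rw [L624pad_apply, dif_neg (by tauto), zero_mul]
    rw [Matrix.mul_apply]
    apply Finset.sum_congr rfl
    intro l _
    rw [L624pad_apply, L624pad_apply, dif_pos ⟨h.1, l.isLt⟩, dif_pos ⟨l.isLt, h.2⟩]
    simp [Fin.eta]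
  · symm
    apply Finset.sum_eq_zero
    intro l _
    rcases not_and_or.mp h with h' | h'
    · rw [L624pad_apply, dif_neg (by tauto), zero_mul]
    · rw [L624pad_apply (B) l j, dif_neg (by tauto), mul_zero]

theorem L624pad_sub (A B : Matrix (Fin n) (Fin n) k) :
    L624pad (n := n) (A - B) = L624pad (n := n) A - L624pad (n := n) B := by
  ext i j
  simp only [Matrix.sub_apply, L624pad_apply]
  split_ifs with h
  · rfl
  · ring

theorem L624pad_smul (c : k) (A : Matrix (Fin n) (Fin n) k) :
    L624pad (n := n) (c • A) = c • L624pad (n := n) A := by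
  ext i j
  simp only [Matrix.smul_apply, L624pad_apply]
  split_ifs with h
  · rfl
  · exact (smul_zero c).symm

theorem L624pad_zero : L624pad (n := n) (0 : Matrix (Fin n) (Fin n) k) = 0 := by
  ext i j
  simp only [L624pad_apply]
  split_ifs with h <;> rfl

theorem L624pad_lie (hn : n ≤ 5) (A B : Matrix (Fin n) (Fin n) k) :
    L624pad (n := n) ⁅A, B⁆ = ⁅L624pad (n := n) A, L624pad (n := n) B⁆ := by
  rw [Ring.lie_def, Ring.lie_def, L624pad_sub, L624pad_mul hn, L624pad_mul hn]

theorem L624pad_upp (A : Matrix (Fin n) (Fin n) k) (hA : ∀ i j : Fin n, j ≤ i → A i j = 0) :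
    L624Upp 1 (L624pad (n := n) A) := by
  intro i j hij
  rw [L624pad_apply]
  split_ifs with h
  · exact hA _ _ (Fin.mk_le_mk.mpr (by omega))
  · rfl

end Pad
theorem L624glue {k : Type*} [Field k] [CharZero k] (e : k) (n : ℕ) (hn : n ≤ 5)
    (g : LieSubalgebra k (Matrix (Fin n) (Fin n) k)) (hg : g ≤ strictUpper k n)
    (b : Module.Basis (Fin 6) k g) (hb : IsL624Basis e b) :
    ∃ x : k, x ^ 2 = e := by
  obtain ⟨h01, h02, h03, h12, h13, z04, z05, z14, z15, z23, z24, z25, z34, z35, z45⟩ := hb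
  have cb : ∀ x y : g, ((⁅x, y⁆ : g) : Matrix (Fin n) (Fin n) k)
      = ⁅(x : Matrix (Fin n) (Fin n) k), (y : Matrix (Fin n) (Fin n) k)⁆ :=
    fun x y => rfl
  have su : ∀ i : Fin 6, ∀ i' j' : Fin n, j' ≤ i' →
      ((b i : Matrix (Fin n) (Fin n) k)) i' j' = 0 := fun i => hg (b i).2
  have m01 : ((b 2 : Matrix (Fin n) (Fin n) k))
      = ⁅(b 0 : Matrix (Fin n) (Fin n) k), (b 1 : Matrix (Fin n) (Fin n) k)⁆ := by
    rw [← h01]; exact cb _ _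
  have m02 : ((b 4 : Matrix (Fin n) (Fin n) k))
      = ⁅(b 0 : Matrix (Fin n) (Fin n) k), (b 2 : Matrix (Fin n) (Fin n) k)⁆ := by
    rw [← h02]; exact cb _ _
  have m12 : ((b 5 : Matrix (Fin n) (Fin n) k))
      = ⁅(b 1 : Matrix (Fin n) (Fin n) k), (b 2 : Matrix (Fin n) (Fin n) k)⁆ := by
    rw [← h12]; exact cb _ _
  have m03 : ⁅(b 0 : Matrix (Fin n) (Fin n) k), (b 3 : Matrix (Fin n) (Fin n) k)⁆
      = e • (b 5 : Matrix (Fin n) (Fin n) k) := by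
    rw [← cb, h03]; rfl
  have m13 : ⁅(b 1 : Matrix (Fin n) (Fin n) k), (b 3 : Matrix (Fin n) (Fin n) k)⁆
      = (b 4 : Matrix (Fin n) (Fin n) k) := by
    rw [← cb, h13]
  have mz : ∀ (i j : Fin 6), (⁅b i, b j⁆ : g) = 0 →
      ⁅(b i : Matrix (Fin n) (Fin n) k), (b j : Matrix (Fin n) (Fin n) k)⁆ = 0 := by
    intro i j h
    rw [← cb, h]; rfl
  refine L624core e (L624pad ((b 0 : Matrix (Fin n) (Fin n) k)))
    (L624pad ((b 1 : Matrix (Fin n) (Fin n) k))) (L624pad ((b 3 : Matrix (Fin n) (Fin n) k)))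
    (L624pad ((b 2 : Matrix (Fin n) (Fin n) k))) (L624pad ((b 4 : Matrix (Fin n) (Fin n) k)))
    (L624pad ((b 5 : Matrix (Fin n) (Fin n) k)))
    (L624pad_upp _ (su 0)) (L624pad_upp _ (su 1)) (L624pad_upp _ (su 3))
    (by rw [m01, L624pad_lie hn]) (by rw [m02, L624pad_lie hn]) (by rw [m12, L624pad_lie hn])
    (by rw [← L624pad_lie hn, m03, L624pad_smul])
    (by rw [← L624pad_lie hn, m13])
    (by rw [← L624pad_lie hn, mz 0 4 z04, L624pad_zero])
    (by rw [← L624pad_lie hn, mz 0 5 z05, L624pad_zero])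
    (by rw [← L624pad_lie hn, mz 1 4 z14, L624pad_zero])
    (by rw [← L624pad_lie hn, mz 1 5 z15, L624pad_zero])
    (by rw [← L624pad_lie hn, mz 3 4 z34, L624pad_zero])
    (by rw [← L624pad_lie hn, mz 3 5 z35, L624pad_zero])
    ?_
  intro lam mu hne heq
  -- pull the equation back to `Matrix (Fin n)`
  have hm : mu • (b 4 : Matrix (Fin n) (Fin n) k) = lam • (b 5 : Matrix (Fin n) (Fin n) k) := by
    ext i j
    have := congrFun (congrFun heq (Fin.castLE hn i)) (Fin.castLE hn j)
    simp only [Matrix.smul_apply, smul_eq_mul] at this ⊢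
    rwa [L624pad_entry hn, L624pad_entry hn] at this
  have hgeq : mu • (b 4) = lam • (b 5) := by
    apply Subtype.ext
    show mu • ((b 4 : Matrix (Fin n) (Fin n) k)) = lam • ((b 5 : Matrix (Fin n) (Fin n) k))
    exact hm
  have li := Fintype.linearIndependent_iff.mp b.linearIndependent
    (fun i => if i = 4 then mu else if i = 5 then -lam else 0) ?_
  · have h4 := li 4
    have h5 := li 5
    simp at h4 h5
    exact hne ⟨by simpa using h5, h4⟩
  · rw [Fin.sum_univ_six]
    simp only [show (0:Fin 6) ≠ 4 by decide, show (1:Fin 6) ≠ 4 by decide,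
      show (2:Fin 6) ≠ 4 by decide, show (3:Fin 6) ≠ 4 by decide]
    simp only [if_neg, if_pos]
    simp [hgeq]

end L624Aux

/-- If `n_5(k)` contains a Lie subalgebra isomorphic to `L_{6,24}(ε)` then `ε` is a square
in `k`; consequently, if `ε` is not a square in `k`, then any Lie subalgebra of `n_n(k)`
isomorphic to `L_{6,24}(ε)` forces `n ≥ 6`. -/
theorem L624_subalgebra_strictUpper
    (k : Type*) [Field k] [CharZero k] (ε : k) :
    ((∃ g : LieSubalgebra k (Matrix (Fin 5) (Fin 5) k), g ≤ strictUpper k 5 ∧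
        ∃ b : Module.Basis (Fin 6) k g, IsL624Basis ε b) → ∃ a : k, a ^ 2 = ε) ∧
    ((∀ a : k, a ^ 2 ≠ ε) → ∀ (n : ℕ) (g : LieSubalgebra k (Matrix (Fin n) (Fin n) k)),
        g ≤ strictUpper k n → (∃ b : Module.Basis (Fin 6) k g, IsL624Basis ε b) → 6 ≤ n) := by
  constructor
  · rintro ⟨g, hg, b, hb⟩
    exact L624glue ε 5 le_rfl g hg b hb
  · intro hns n g hg hb
    by_contra h6
    push_neg at h6
    obtain ⟨b, hb2⟩ := hb
    obtain ⟨x, hx⟩ := L624glue ε n (by omega) g hg b hb2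
    exact hns x hx
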